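/- Let (G_n) be the chain of graphs as above with stability index r, where G_r has an edge of the form (b, r) and B = max{i : (i,r) ∈ E(G_r)}, b = min{i : (i,r) ∈ E(G_r)}, and assume max{j : (i,j) ∈ E(G_r)} = r. Then for all n ≥ 2r + 1, the neighborhood of the vertex n in G_n is N(n) = {b, b+1, ..., n - r + B}, and hence the vertex set of G_n \ N[n] is {1,...,b-1} ∪ {n-r+B+1, ..., n-1}. -/
import Mathlib


/-- `(k,l)` lies in the triangle `Δ((i,j), n-r)` for some edge `(i,j) ∈ E` of `G_r`,
i.e. `0 ≤ k - i ≤ l - j ≤ n - r` (written additively). -/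
def triRel (E : Set (ℕ × ℕ)) (r n k l : ℕ) : Prop :=
  ∃ q ∈ E, q.1 ≤ k ∧ k + q.2 ≤ l + q.1 ∧ l + r ≤ n + q.2

/-- The graph `G_n` of the invariant chain determined by the edge set `E` of `G_r`:
`(k,l)` with `k < l` is an edge of `G_n` iff `(k,l) ∈ Δ((i,j), n-r)` for some `(i,j) ∈ E`. -/
def chainGraph (E : Set (ℕ × ℕ)) (r n : ℕ) : SimpleGraph ℕ :=
  SimpleGraph.fromRel (triRel E r n)

/-- `E` is a set of edges `(i,j)` of a graph `G_r` on `{1,…,r}` with `i < j`. -/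
def goodEdges (E : Set (ℕ × ℕ)) (r : ℕ) : Prop :=
  ∀ q ∈ E, 1 ≤ q.1 ∧ q.1 < q.2 ∧ q.2 ≤ r

/-- Suppose `G_r` has edges ending at `r`, with `b` resp. `B` the least resp. greatest
first coordinate of such an edge. Then for `n ≥ 2r + 1`, the neighborhood of the
vertex `n` in `G_n` is `{b, b+1, …, n-r+B}`, and hence the vertex set of
`G_n \ N[n]` is `{1,…,b-1} ∪ {n-r+B+1,…,n-1}`. -/
theorem neighborhood_of_last_vertex (E : Set (ℕ × ℕ)) (r n b B : ℕ) (hE : goodEdges E r)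
    (hb : (b, r) ∈ E) (hB : (B, r) ∈ E)
    (hbmin : ∀ i, (i, r) ∈ E → b ≤ i) (hBmax : ∀ i, (i, r) ∈ E → i ≤ B)
    (hn : 2 * r + 1 ≤ n) :
    (chainGraph E r n).neighborSet n = Set.Icc b (n - r + B) ∧
    Set.Icc 1 n \ insert n ((chainGraph E r n).neighborSet n) =
      Set.Icc 1 (b - 1) ∪ Set.Icc (n - r + B + 1) (n - 1) := by

  obtain ⟨hb1, hbr, -⟩ := hE _ hb
  obtain ⟨hB1, hBr, -⟩ := hE _ hB
  have hbB : b ≤ B := hBmax b hb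
  have key : (chainGraph E r n).neighborSet n = Set.Icc b (n - r + B) := by
    ext m
    simp only [SimpleGraph.mem_neighborSet, chainGraph, SimpleGraph.fromRel_adj, Set.mem_Icc]
    constructor
    · rintro ⟨hne, h | h⟩
      · obtain ⟨⟨i, j⟩, hq, h1, h2, h3⟩ := h
        obtain ⟨hi1, hij, hjr⟩ := hE _ hq
        simp only at h1 h2 h3 hi1 hij hjr
        omega
      · obtain ⟨⟨i, j⟩, hq, h1, h2, h3⟩ := h
        obtain ⟨hi1, hij, hjr⟩ := hE _ hq
        simp only at h1 h2 h3 hi1 hij hjr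
        have hjr' : j = r := by omega
        subst hjr'
        have h4 := hbmin i hq
        have h5 := hBmax i hq
        omega
    · intro ⟨h1, h2⟩
      refine ⟨by omega, Or.inr ?_⟩
      by_cases hc : m + r ≤ n + b
      · exact ⟨(b, r), hb, h1, by omega, by omega⟩
      · exact ⟨(B, r), hB, by simp; omega, by simp; omega, by omega⟩
  refine ⟨key, ?_⟩
  rw [key]
  ext m
  simp only [Set.mem_diff, Set.mem_Icc, Set.mem_insert_iff, Set.mem_union]
  omega
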